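/- Let (Ω, F, ℙ, (F_{t_l})_{l=0}^ℓ) be a finite filtered probability space with ℙ({ω}) > 0 for all ω, F_{t_0} = {∅, Ω}, F_{t_ℓ} = 2^Ω, and suppose every atom of F_{t_l} with l < ℓ contains exactly n+1 atoms of F_{t_{l+1}}. Let x̃ = (x̃(t_l))_{l=0}^ℓ be an ℝ^n-valued martingale such that for every l < ℓ and every atom ω of F_{t_l}, listing the n+1 successor atoms ω^{(1)}, ..., ω^{(n+1)} of ω, the n vectors (x̃_k(t_{l+1}, ω^{(1)}), ..., x̃_k(t_{l+1}, ω^{(n+1)})) ∈ ℝ^{n+1} for k = 1, ..., n together with the all-ones vector (1, ..., 1) ∈ ℝ^{n+1} are linearly independent. Then every real-valued martingale M = (M(t_l))_{l=0}^ℓ admits a predictable representation: there exists an adapted ℝ^n-valued process θ = (θ(t_l))_{l=0}^{ℓ−1} such that M(t_{l+1}) − M(t_l) = θ(t_l)ᵀ (x̃(t_{l+1}) − x̃(t_l)) for every l < ℓ. -/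

import Mathlib

open MeasureTheory

namespace Paper

/-- The atom of the σ-algebra `m` containing the point `ω`:
the intersection of all `m`-measurable sets containing `ω`. -/
def atomOf {Ω : Type*} (m : MeasurableSpace Ω) (ω : Ω) : Set Ω :=
  ⋂₀ {s : Set Ω | MeasurableSet[m] s ∧ ω ∈ s}

section Atoms

variable {Ω : Type*} [Fintype Ω] {m : MeasurableSpace Ω}

lemma mem_atomOf (ω : Ω) : ω ∈ atomOf m ω := fun _ hs => hs.2

lemma atomOf_subset {s : Set Ω} (hs : MeasurableSet[m] s) {ω : Ω} (hω : ω ∈ s) :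
    atomOf m ω ⊆ s := Set.sInter_subset_of_mem ⟨hs, hω⟩

lemma measurableSet_atomOf (ω : Ω) : MeasurableSet[m] (atomOf m ω) :=
  MeasurableSet.sInter (Set.to_countable _) (fun _ ht => ht.1)

lemma atomOf_eq_of_mem {ω ω' : Ω} (h : ω' ∈ atomOf m ω) : atomOf m ω' = atomOf m ω := by
  have hsym : ω ∈ atomOf m ω' := by
    by_contra hc
    exact (atomOf_subset (MeasurableSet.compl (measurableSet_atomOf ω')) hc) h (mem_atomOf ω')
  exact Set.Subset.antisymm (atomOf_subset (measurableSet_atomOf ω) h)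
    (atomOf_subset (measurableSet_atomOf ω') hsym)

lemma apply_eq_of_mem_atomOf {β : Type*} [MeasurableSpace β] [MeasurableSingletonClass β]
    {f : Ω → β} (hf : Measurable[m] f) {ω ω' : Ω} (h : ω' ∈ atomOf m ω) : f ω' = f ω :=
  atomOf_subset (hf (measurableSet_singleton (f ω))) (Set.mem_singleton _) h

lemma measurable_of_const_on_atom {f : Ω → ℝ}
    (h : ∀ ω ω', ω' ∈ atomOf m ω → f ω' = f ω) : Measurable[m] f := by
  intro s _
  have heq : f ⁻¹' s = ⋃ ω ∈ f ⁻¹' s, atomOf m ω := by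
    ext x
    constructor
    · intro hx; exact Set.mem_biUnion hx (mem_atomOf x)
    · intro hx
      simp only [Set.mem_iUnion] at hx
      obtain ⟨ω, hω, hxω⟩ := hx
      simpa [Set.mem_preimage, h ω x hxω] using hω
  rw [heq]
  exact (Set.toFinite _).measurableSet_biUnion fun ω _ => measurableSet_atomOf ω

end Atoms

/-- Choice of a point in a set. -/
noncomputable def pickPoint {Ω : Type*} [Nonempty Ω] (A : Set Ω) : Ω :=
  Classical.epsilon (· ∈ A)

lemma pickPoint_mem {Ω : Type*} [Nonempty Ω] {A : Set Ω} (h : A.Nonempty) :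
    pickPoint A ∈ A :=
  Classical.epsilon_spec h

/-- One-step predictable representation. -/
lemma step {Ω : Type*} [Fintype Ω] (n : ℕ) (m m' : MeasurableSpace Ω)
    [inst : MeasurableSpace Ω] (hTop : inst = ⊤)
    (μ : Measure Ω) [IsProbabilityMeasure μ] (hpos : ∀ ω : Ω, 0 < μ {ω})
    (hcard : ∀ ω : Ω,
      Set.ncard {A : Set Ω | ∃ ω' ∈ atomOf m ω, A = atomOf m' ω'} = n + 1)
    (x x' : Ω → Fin n → ℝ)
    (hx_meas : ∀ k, Measurable[m] fun ω => x ω k)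
    (hx'_meas : ∀ k, Measurable[m'] fun ω => x' ω k)
    (hx_mart : ∀ (k : Fin n) (ω : Ω), (μ[fun ω' => x' ω' k | m]) ω = x ω k)
    (hLI : ∀ (ω : Ω) (e : Fin (n+1) → Ω),
      (∀ j, e j ∈ atomOf m ω) →
      (∀ j j', j ≠ j' → atomOf m' (e j) ≠ atomOf m' (e j')) →
      LinearIndependent ℝ
        (Fin.cons (fun _ : Fin (n+1) => (1:ℝ))
          (fun (k : Fin n) (j : Fin (n+1)) => x' (e j) k)))
    (M M' : Ω → ℝ) (hM_meas : Measurable[m] M) (hM'_meas : Measurable[m'] M')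
    (hM_mart : ∀ ω, (μ[M' | m]) ω = M ω) :
    ∃ θ : Ω → Fin n → ℝ, (∀ k, Measurable[m] fun ω => θ ω k) ∧
      ∀ ω, M' ω - M ω = ∑ k, θ ω k * (x' ω k - x ω k) := by
  classical
  have hm : m ≤ inst := by rw [hTop]; exact le_top
  haveI msc : MeasurableSingletonClass Ω :=
    ⟨fun a => by rw [hTop]; exact MeasurableSpace.measurableSet_top⟩
  have hint : ∀ f : Ω → ℝ, Integrable f μ := fun f => Integrable.of_finite
  have hNE : Nonempty Ω := by
    by_contra h
    rw [not_nonempty_iff] at h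
    have h1 : μ Set.univ = 1 := measure_univ
    rw [Set.univ_eq_empty_iff.2 h, measure_empty] at h1
    exact zero_ne_one h1
  -- existence of the affine representation on each atom
  have exist : ∀ ω₀ : Ω, ∃ c : ℝ, ∃ θ : Fin n → ℝ,
      ∀ ω' ∈ atomOf m ω₀, M' ω' = c + ∑ k, θ k * x' ω' k := by
    intro ω₀
    have hfin : ({A : Set Ω | ∃ ω' ∈ atomOf m ω₀, A = atomOf m' ω'}).Finite :=
      Set.toFinite _
    have hScard : hfin.toFinset.card = n + 1 := by
      rw [← Set.ncard_eq_toFinset_card _ hfin]; exact hcard ω₀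
    let φe := Finset.equivFinOfCardEq hScard
    have hsel : ∀ j : Fin (n+1), ∃ ω' ∈ atomOf m ω₀,
        (φe.symm j : Set Ω) = atomOf m' ω' := by
      intro j
      have := (φe.symm j).2
      rw [Set.Finite.mem_toFinset] at this
      exact this
    choose e he1 he2 using hsel
    have hdist : ∀ j j', j ≠ j' → atomOf m' (e j) ≠ atomOf m' (e j') := by
      intro j j' hne heq
      apply hne
      have : (φe.symm j : Set Ω) = (φe.symm j' : Set Ω) := by
        rw [he2 j, he2 j', heq]
      exact φe.symm.injective (Subtype.ext this)
    have li := hLI ω₀ e he1 hdist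
    have hcards : Fintype.card (Fin (n+1)) = Module.finrank ℝ (Fin (n+1) → ℝ) := by
      simp [Module.finrank_fintype_fun_eq_card]
    let b := basisOfLinearIndependentOfCardEqFinrank li hcards
    have hb : ⇑b = Fin.cons (fun _ : Fin (n+1) => (1:ℝ))
        (fun (k : Fin n) (j : Fin (n+1)) => x' (e j) k) :=
      coe_basisOfLinearIndependentOfCardEqFinrank li hcards
    set Mv : Fin (n+1) → ℝ := fun j => M' (e j) with hMv
    have hrepr : ∑ i, b.repr Mv i • b i = Mv := b.sum_repr Mv
    refine ⟨b.repr Mv 0, fun k => b.repr Mv k.succ, ?_⟩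
    intro ω' hω'
    -- locate the successor atom of ω'
    have hmem : atomOf m' ω' ∈ hfin.toFinset := by
      rw [Set.Finite.mem_toFinset]; exact ⟨ω', hω', rfl⟩
    set j := φe ⟨atomOf m' ω', hmem⟩ with hj
    have hatom : atomOf m' (e j) = atomOf m' ω' := by
      rw [← he2 j, hj, Equiv.symm_apply_apply]
    have hω'mem : ω' ∈ atomOf m' (e j) := hatom ▸ mem_atomOf ω'
    have hM'eq : M' ω' = M' (e j) := apply_eq_of_mem_atomOf hM'_meas hω'mem
    have hx'eq : ∀ k, x' ω' k = x' (e j) k := fun k =>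
      apply_eq_of_mem_atomOf (hx'_meas k) hω'mem
    have hj' := congrFun hrepr j
    simp only [Finset.sum_apply, Pi.smul_apply, smul_eq_mul, hb] at hj'
    rw [Fin.sum_univ_succ] at hj'
    simp only [Fin.cons_zero, Fin.cons_succ] at hj'
    have hMvj : Mv j = M' (e j) := by rw [hMv]
    rw [hMvj] at hj'
    rw [hM'eq]
    simp only [hx'eq]
    rw [← hj']
    ring
  choose cc θθ hsol using exist
  haveI := hNE
  have hpick : ∀ ω : Ω, pickPoint (atomOf m ω) ∈ atomOf m ω := fun ω =>
    pickPoint_mem ⟨ω, mem_atomOf ω⟩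
  refine ⟨fun ω => θθ (pickPoint (atomOf m ω)), ?_, ?_⟩
  · intro k
    apply measurable_of_const_on_atom
    intro ω ω' hω'
    show θθ (pickPoint (atomOf m ω')) k = θθ (pickPoint (atomOf m ω)) k
    rw [atomOf_eq_of_mem hω']
  · intro ω
    set ω₀ := pickPoint (atomOf m ω) with hω₀def
    have hω₀ : ω₀ ∈ atomOf m ω := hpick ω
    have hAeq : atomOf m ω₀ = atomOf m ω := atomOf_eq_of_mem hω₀
    have hωmem : ω ∈ atomOf m ω₀ := hAeq ▸ mem_atomOf ω
    have hrep : ∀ ω' ∈ atomOf m ω₀, M' ω' = cc ω₀ + ∑ k, θθ ω₀ k * x' ω' k := hsol ω₀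
    set A := atomOf m ω₀ with hAdef
    have hAm : MeasurableSet[m] A := measurableSet_atomOf ω₀
    have hAmeas : MeasurableSet A := hm A hAm
    have hApos : (μ A).toReal ≠ 0 := by
      have h1 : 0 < μ A := lt_of_lt_of_le (hpos ω₀)
        (measure_mono (Set.singleton_subset_iff.2 (mem_atomOf ω₀)))
      exact (ENNReal.toReal_pos h1.ne' (measure_ne_top μ A)).ne'
    have key : ∀ f f' : Ω → ℝ, (∀ ω1, (μ[f' | m]) ω1 = f ω1) → Measurable[m] f →
        ∫ y in A, f' y ∂μ = (μ A).toReal * f ω₀ := by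
      intro f f' hmart hmeas
      have h1 : ∫ y in A, f' y ∂μ = ∫ y in A, (μ[f' | m]) y ∂μ :=
        (setIntegral_condExp hm (hint f') hAm).symm
      have h2 : ∫ y in A, (μ[f' | m]) y ∂μ = ∫ y in A, f y ∂μ := by
        simp only [hmart]
      have h3 : ∫ y in A, f y ∂μ = ∫ y in A, f ω₀ ∂μ :=
        setIntegral_congr_fun hAmeas (fun z hz => apply_eq_of_mem_atomOf hmeas hz)
      rw [h1, h2, h3, setIntegral_const, smul_eq_mul, Measure.real]
    have hMint : ∫ y in A, M' y ∂μ = (μ A).toReal * M ω₀ := key M M' hM_mart hM_meas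
    have hxint : ∀ k, ∫ y in A, x' y k ∂μ = (μ A).toReal * x ω₀ k := fun k =>
      key _ _ (hx_mart k) (hx_meas k)
    have h4 : ∫ y in A, M' y ∂μ = ∫ y in A, (cc ω₀ + ∑ k, θθ ω₀ k * x' y k) ∂μ :=
      setIntegral_congr_fun hAmeas (fun z hz => hrep z hz)
    have h5 : ∫ y in A, (cc ω₀ + ∑ k, θθ ω₀ k * x' y k) ∂μ
        = (μ A).toReal * cc ω₀ + ∑ k, θθ ω₀ k * ((μ A).toReal * x ω₀ k) := by
      rw [integral_add (integrable_const _).integrableOn ((hint _).integrableOn),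
        setIntegral_const, smul_eq_mul, Measure.real, integral_finset_sum _
          (fun k _ => (hint (fun y => θθ ω₀ k * x' y k)).integrableOn)]
      congr 1
      refine Finset.sum_congr rfl fun k _ => ?_
      rw [integral_const_mul, hxint k]
    have hM0 : M ω₀ = cc ω₀ + ∑ k, θθ ω₀ k * x ω₀ k := by
      have h6 : (μ A).toReal * M ω₀
          = (μ A).toReal * (cc ω₀ + ∑ k, θθ ω₀ k * x ω₀ k) := by
        rw [← hMint, h4, h5, mul_add, Finset.mul_sum]
        congr 1
        refine Finset.sum_congr rfl fun k _ => ?_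
        ring
      exact mul_left_cancel₀ hApos h6
    have hxw : ∀ k, x ω k = x ω₀ k := fun k =>
      apply_eq_of_mem_atomOf (hx_meas k) hωmem
    have hMw : M ω = M ω₀ := apply_eq_of_mem_atomOf hM_meas hωmem
    rw [hrep ω hωmem, hMw, hM0]
    simp only [hxw, mul_sub, Finset.sum_sub_distrib]
    ring

/-- predictable representation on a multinomial tree: on a finite filtered
probability space in which every atom of `𝓕 l` (for `l < ℓ`) splits into exactly `n+1` atoms
of `𝓕 (l+1)`, if the `ℝ^n`-valued martingale `xt` is such that, on each atom, the `n` vectors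
of next-period values of its components together with the all-ones vector of `ℝ^{n+1}` are
linearly independent, then every real-valued martingale `Mart` admits a predictable
representation `ΔMart(t_l) = θ(t_l)ᵀ Δxt(t_l)` with `θ` adapted. -/
theorem martingale_representation_tree
    {Ω : Type*} [Fintype Ω] [MeasurableSpace Ω]
    (hTop : (inferInstance : MeasurableSpace Ω) = ⊤)
    (μ : Measure Ω) [IsProbabilityMeasure μ] (hpos : ∀ ω : Ω, 0 < μ {ω})
    (n ℓ : ℕ)
    (𝓕 : Fin (ℓ+1) → MeasurableSpace Ω) (hmono : Monotone 𝓕)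
    (h𝓕0 : 𝓕 0 = ⊥) (h𝓕last : 𝓕 (Fin.last ℓ) = (inferInstance : MeasurableSpace Ω))
    (hbranch : ∀ (l : Fin ℓ) (ω : Ω),
      Set.ncard {A : Set Ω | ∃ ω' ∈ atomOf (𝓕 l.castSucc) ω, A = atomOf (𝓕 l.succ) ω'}
        = n + 1)
    (xt : Fin (ℓ+1) → Ω → Fin n → ℝ)
    (hxt_adapted : ∀ l k, Measurable[𝓕 l] fun ω => xt l ω k)
    (hxt_mart : ∀ (l : Fin ℓ) (k : Fin n) (ω : Ω),
      (μ[fun ω' => xt l.succ ω' k | 𝓕 l.castSucc]) ω = xt l.castSucc ω k)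
    (hLI : ∀ (l : Fin ℓ) (ω : Ω) (e : Fin (n+1) → Ω),
      (∀ j, e j ∈ atomOf (𝓕 l.castSucc) ω) →
      (∀ j j', j ≠ j' → atomOf (𝓕 l.succ) (e j) ≠ atomOf (𝓕 l.succ) (e j')) →
      LinearIndependent ℝ
        (Fin.cons (fun _ : Fin (n+1) => (1:ℝ))
          (fun (k : Fin n) (j : Fin (n+1)) => xt l.succ (e j) k)))
    (Mart : Fin (ℓ+1) → Ω → ℝ)
    (hM_adapted : ∀ l, Measurable[𝓕 l] (Mart l))
    (hM_mart : ∀ (l : Fin ℓ) (ω : Ω),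
      (μ[Mart l.succ | 𝓕 l.castSucc]) ω = Mart l.castSucc ω) :
    ∃ θ : Fin ℓ → Ω → Fin n → ℝ,
      (∀ l k, Measurable[𝓕 l.castSucc] fun ω => θ l ω k) ∧
      ∀ (l : Fin ℓ) (ω : Ω),
        Mart l.succ ω - Mart l.castSucc ω
          = ∑ k, θ l ω k * (xt l.succ ω k - xt l.castSucc ω k) := by
  choose θ hθ1 hθ2 using fun l : Fin ℓ =>
    step n (𝓕 l.castSucc) (𝓕 l.succ) hTop μ hpos (hbranch l)
      (xt l.castSucc) (xt l.succ) (hxt_adapted l.castSucc) (hxt_adapted l.succ)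
      (fun k ω => hxt_mart l k ω) (hLI l)
      (Mart l.castSucc) (Mart l.succ) (hM_adapted l.castSucc) (hM_adapted l.succ)
      (hM_mart l)
  exact ⟨θ, hθ1, hθ2⟩

end Paper
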